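/- Let (Ω, μ̃) be a probability space with expectation Ẽ, let A, B be events structures inducing a measurable function M ≥ 0 with Ẽ[M] = 1 (a mixing coefficient), and let ū ∈ (0, 1], p̃ ∈ (0, 1] satisfy: M ∈ [0, 1/ū], M > 0 exactly on a set of measure p̃. Then the mixing entropy S_mix := ū·Ẽ[M log M] satisfies ū·log(1/p̃) ≤ S_mix ≤ ū·log Ẽ[M²], and both inequalities are saturated if and only if M ∈ {0, 1/p̃} almost surely. -/

import Mathlib

open MeasureTheory Real Set

/-- tangent line inequality for `x log x` at `c`, restricted to the support. -/
lemma mix_key_low {t c : ℝ} (ht : 0 ≤ t) (hc : 0 < c) :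
    (Real.log c + 1) * t - c * (if 0 < t then 1 else 0) ≤ t * Real.log t := by
  rcases eq_or_lt_of_le ht with h | h
  · simp [← h]
  · simp only [if_pos h, mul_one]
    have hy : 0 < c / t := div_pos hc h
    have h1 := Real.log_le_sub_one_of_pos hy
    rw [Real.log_div (ne_of_gt hc) (ne_of_gt h)] at h1
    have h2 : (Real.log c - Real.log t) * t ≤ (c / t - 1) * t :=
      mul_le_mul_of_nonneg_right h1 (le_of_lt h)
    have h3 : c / t * t = c := div_mul_cancel₀ c (ne_of_gt h)
    nlinarith

/-- strict version of the tangent inequality. -/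
lemma mix_key_low_strict {t c : ℝ} (ht : 0 < t) (hc : 0 < c) (hne : t ≠ c) :
    (Real.log c + 1) * t - c * (if 0 < t then 1 else 0) < t * Real.log t := by
  simp only [if_pos ht, mul_one]
  have hy : 0 < c / t := div_pos hc ht
  have hy1 : c / t ≠ 1 := by
    intro h
    exact hne ((div_eq_one_iff_eq (ne_of_gt ht)).mp h).symm
  have h1 := Real.log_lt_sub_one_of_pos hy hy1
  rw [Real.log_div (ne_of_gt hc) (ne_of_gt ht)] at h1
  have h2 : (Real.log c - Real.log t) * t < (c / t - 1) * t :=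
    mul_lt_mul_of_pos_right h1 ht
  have h3 : c / t * t = c := div_mul_cancel₀ c (ne_of_gt ht)
  nlinarith

/-- tangent line inequality for the upper bound (log concavity, weighted by `t`). -/
lemma mix_key_up {t I : ℝ} (ht : 0 ≤ t) (hI : 0 < I) :
    t * Real.log t ≤ t * Real.log I + (t ^ 2 - I * t) / I := by
  rcases eq_or_lt_of_le ht with h | h
  · simp [← h]
  · have hy : 0 < t / I := div_pos h hI
    have h1 := Real.log_le_sub_one_of_pos hy
    rw [Real.log_div (ne_of_gt h) (ne_of_gt hI)] at h1
    have h2 : (Real.log t - Real.log I) * t ≤ (t / I - 1) * t :=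
      mul_le_mul_of_nonneg_right h1 (le_of_lt h)
    have h3 : (t / I - 1) * t = (t ^ 2 - I * t) / I := by
      field_simp
    nlinarith

/-- Strong bounds on mixing entropy: if `M ≥ 0` is a mixing coefficient on a
probability space with `Ẽ[M] = 1`, `M ≤ 1/ū`, and `M > 0` exactly on a set of
measure `p̃`, then the mixing entropy `S_mix = ū·Ẽ[M log M]` satisfies
`ū·log(1/p̃) ≤ S_mix ≤ ū·log Ẽ[M²]`, with both inequalities saturated iff
`M ∈ {0, 1/p̃}` almost surely. -/
theorem mixing_entropy_bounds
    {Ω : Type*} [MeasurableSpace Ω] (μ : Measure Ω) [IsProbabilityMeasure μ]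
    (M : Ω → ℝ) (hM : Measurable M) (hM0 : ∀ x, 0 ≤ M x)
    (ub pt : ℝ) (hub : 0 < ub) (hub1 : ub ≤ 1) (hpt : 0 < pt) (hpt1 : pt ≤ 1)
    (hM1 : ∫ x, M x ∂μ = 1)
    (hMub : ∀ x, M x ≤ 1 / ub)
    (hptdef : (μ {x | 0 < M x}).toReal = pt)
    (hint1 : Integrable (fun x => M x * Real.log (M x)) μ)
    (hint2 : Integrable (fun x => (M x) ^ 2) μ) :
    let S := ub * ∫ x, M x * Real.log (M x) ∂μ
    ub * Real.log (1 / pt) ≤ S ∧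
      S ≤ ub * Real.log (∫ x, (M x) ^ 2 ∂μ) ∧
      ((ub * Real.log (1 / pt) = S ∧ S = ub * Real.log (∫ x, (M x) ^ 2 ∂μ)) ↔
        ∀ᵐ x ∂μ, M x = 0 ∨ M x = 1 / pt) := by
  intro S
  have hcpos : (0:ℝ) < 1 / pt := by positivity
  set c : ℝ := 1 / pt with hc
  have hcpt : c * pt = 1 := by rw [hc]; field_simp
  have hs : MeasurableSet {x | 0 < M x} := measurableSet_lt measurable_const hM
  have intM : Integrable M μ := by
    refine (integrable_const (1 / ub)).mono' hM.aestronglyMeasurable ?_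
    filter_upwards with x
    rw [Real.norm_eq_abs, abs_of_nonneg (hM0 x)]
    exact hMub x
  have intInd : Integrable ({x | 0 < M x}.indicator fun _ => c) μ :=
    (integrable_const c).indicator hs
  -- lower bound via the function g
  set g : Ω → ℝ := fun x =>
    M x * Real.log (M x) - ((Real.log c + 1) * M x - {x | 0 < M x}.indicator (fun _ => c) x)
    with hgdef
  have hind : ∀ x, {x | 0 < M x}.indicator (fun _ => c) x = c * (if 0 < M x then 1 else 0) := by
    intro x
    by_cases hx : 0 < M x <;> simp [Set.indicator_apply, hx]
  have hg0 : ∀ x, 0 ≤ g x := by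
    intro x
    have := mix_key_low (hM0 x) hcpos
    simp only [hgdef, hind x]
    linarith
  have intg2 : Integrable
      (fun x => (Real.log c + 1) * M x - {x | 0 < M x}.indicator (fun _ => c) x) μ :=
    (intM.const_mul (Real.log c + 1)).sub intInd
  have intg : Integrable g μ := hint1.sub intg2
  have hIndInt : ∫ x, {x | 0 < M x}.indicator (fun _ => c) x ∂μ = 1 := by
    rw [integral_indicator_const c hs, measureReal_def, hptdef, smul_eq_mul]
    linarith [hcpt]
  have hgint : ∫ x, g x ∂μ = (∫ x, M x * Real.log (M x) ∂μ) - Real.log c := by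
    rw [hgdef, integral_sub hint1 intg2,
      integral_sub (intM.const_mul (Real.log c + 1) : Integrable (fun x => (Real.log c + 1) * M x) μ) intInd,
      integral_const_mul, hM1, hIndInt]
    ring
  have hlow : Real.log c ≤ ∫ x, M x * Real.log (M x) ∂μ := by
    have h : 0 ≤ ∫ x, g x ∂μ := integral_nonneg hg0
    rw [hgint] at h; linarith
  -- upper bound
  set I : ℝ := ∫ x, (M x) ^ 2 ∂μ with hI
  have hI1 : 1 ≤ I := by
    have hnn : ∀ x, 0 ≤ (M x) ^ 2 - 2 * M x + 1 := by
      intro x; nlinarith [sq_nonneg (M x - 1)]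
    have intq1 : Integrable (fun x => (M x) ^ 2 - 2 * M x) μ :=
      hint2.sub (intM.const_mul 2)
    have h : 0 ≤ ∫ x, ((M x) ^ 2 - 2 * M x + 1) ∂μ := integral_nonneg hnn
    rw [integral_add intq1 (integrable_const 1),
      integral_sub hint2 (intM.const_mul (2:ℝ) : Integrable (fun x => 2 * M x) μ),
      integral_const_mul, hM1, integral_const] at h
    simp at h
    linarith
  have hIpos : 0 < I := by linarith
  set h : Ω → ℝ := fun x =>
    M x * Real.log I + ((M x) ^ 2 - I * M x) / I - M x * Real.log (M x) with hhdef
  have hh0 : ∀ x, 0 ≤ h x := by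
    intro x
    have := mix_key_up (hM0 x) hIpos
    simp only [hhdef]
    linarith
  have intA : Integrable (fun x => M x * Real.log I) μ := intM.mul_const (Real.log I)
  have intB : Integrable (fun x => ((M x) ^ 2 - I * M x) / I) μ :=
    ((hint2.sub (intM.const_mul I) : Integrable (fun x => (M x) ^ 2 - I * M x) μ)).div_const I
  have intAB : Integrable (fun x => M x * Real.log I + ((M x) ^ 2 - I * M x) / I) μ :=
    intA.add intB
  have inth : Integrable h μ := intAB.sub hint1
  have hhint : ∫ x, h x ∂μ = Real.log I - ∫ x, M x * Real.log (M x) ∂μ := by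
    rw [hhdef, integral_sub intAB hint1, integral_add intA intB]
    have e2 : ∫ x, M x * Real.log I ∂μ = Real.log I := by
      rw [show (fun x => M x * Real.log I) = fun x => Real.log I * M x from by
        funext x; ring, integral_const_mul, hM1, mul_one]
    have e3 : ∫ x, ((M x) ^ 2 - I * M x) / I ∂μ = 0 := by
      rw [integral_div,
        integral_sub hint2 (intM.const_mul I : Integrable (fun x => I * M x) μ),
        integral_const_mul, hM1]
      simp [hI]
    rw [e2, e3]; ring
  have hup : ∫ x, M x * Real.log (M x) ∂μ ≤ Real.log I := by
    have h : 0 ≤ ∫ x, h x ∂μ := integral_nonneg hh0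
    rw [hhint] at h; linarith
  refine ⟨mul_le_mul_of_nonneg_left hlow (le_of_lt hub),
    mul_le_mul_of_nonneg_left hup (le_of_lt hub), ?_, ?_⟩
  · -- equality implies a.e. two-valued
    rintro ⟨h1, -⟩
    have hEq : ∫ x, M x * Real.log (M x) ∂μ = Real.log c := by
      have := mul_left_cancel₀ (ne_of_gt hub) h1
      linarith
    have hg0' : ∫ x, g x ∂μ = 0 := by rw [hgint, hEq]; ring
    have hae : g =ᵐ[μ] 0 := (integral_eq_zero_iff_of_nonneg hg0 intg).mp hg0'
    filter_upwards [hae] with x hx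
    by_contra hcon
    push_neg at hcon
    obtain ⟨hx0, hxc⟩ := hcon
    have hxpos : 0 < M x := lt_of_le_of_ne (hM0 x) (Ne.symm hx0)
    have := mix_key_low_strict hxpos hcpos hxc
    have hgx : g x = 0 := hx
    simp only [hgdef, hind x] at hgx
    linarith
  · -- a.e. two-valued implies both equalities
    intro hae
    have e1 : (fun x => M x * Real.log (M x)) =ᵐ[μ] fun x => Real.log c * M x := by
      filter_upwards [hae] with x hx
      rcases hx with h0 | hcx
      · simp [h0]
      · rw [hcx]; ring
    have hEq : ∫ x, M x * Real.log (M x) ∂μ = Real.log c := by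
      rw [integral_congr_ae e1, integral_const_mul, hM1, mul_one]
    have e2 : (fun x => (M x) ^ 2) =ᵐ[μ] fun x => c * M x := by
      filter_upwards [hae] with x hx
      rcases hx with h0 | hcx
      · simp [h0]
      · rw [hcx]; ring
    have hIeq : I = c := by
      rw [hI, integral_congr_ae e2, integral_const_mul, hM1, mul_one]
    constructor
    · show ub * Real.log c = S
      rw [show S = ub * ∫ x, M x * Real.log (M x) ∂μ from rfl, hEq]
    · show S = ub * Real.log I
      rw [show S = ub * ∫ x, M x * Real.log (M x) ∂μ from rfl, hEq, hIeq]
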